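/- The alternating sum ∑_{k≥0} (-1)^{k+1} N_{k,ℓ} satisfies the recurrence ∑_{k≥0} (-1)^{k+1} N_{k,ℓ} = - ∑_{k≥0} (-1)^{k+1} N_{k,ℓ-1} for every ℓ ≥ 1. -/

import Mathlib

/-- `N k ℓ` : the number of ordered set partitions of an `ℓ`-element set into `k`
nonempty blocks, i.e. the number of surjections from `Fin ℓ` onto `Fin k`. -/
noncomputable def N (k ℓ : ℕ) : ℕ := Nat.card {f : Fin ℓ → Fin k // Function.Surjective f}

open Finset

/-- counting functions with range inside a given finset -/
lemma card_filter_mem (ℓ k : ℕ) (s : Finset (Fin k)) :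
    #({f : Fin ℓ → Fin k | ∀ x, f x ∈ s} : Finset (Fin ℓ → Fin k)) = #s ^ ℓ := by
  classical
  rw [← Fintype.card_subtype]
  have e : {f : Fin ℓ → Fin k // ∀ x, f x ∈ s} ≃ (Fin ℓ → ↥s) :=
    { toFun := fun f x => ⟨f.1 x, f.2 x⟩
      invFun := fun g => ⟨fun x => (g x).1, fun x => (g x).2⟩
      left_inv := fun f => rfl
      right_inv := fun g => rfl }
  rw [Fintype.card_congr e, Fintype.card_fun, Fintype.card_coe, Fintype.card_fin]

/-- Inclusion–exclusion formula for the number of surjections. -/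
lemma N_eq (k ℓ : ℕ) :
    (N k ℓ : ℤ) = (-1) ^ k * ∑ m ∈ range (k + 1), (-1 : ℤ) ^ m * (k.choose m) * m ^ ℓ := by
  classical
  set S : Fin k → Finset (Fin ℓ → Fin k) :=
    fun i => ({f : Fin ℓ → Fin k | ∀ x, f x ≠ i} : Finset _) with hS
  have h1 : (Finset.univ.inf fun i => (S i)ᶜ)
      = ({f : Fin ℓ → Fin k | Function.Surjective f} : Finset _) := by
    ext f
    simp only [Finset.mem_inf, Finset.mem_compl, hS, Finset.mem_filter, Finset.mem_univ,
      true_and, Set.mem_setOf_eq, Function.Surjective]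
    push_neg
    simp
    exact ⟨fun h => (Finset.mem_filter (p := Function.Surjective)).2 ⟨Finset.mem_univ _, h⟩,
      fun h => ((Finset.mem_filter (p := Function.Surjective)).1 h).2⟩
  have hN : (N k ℓ : ℤ) = (#(Finset.univ.inf fun i => (S i)ᶜ) : ℤ) := by
    rw [h1, N, Nat.card_eq_fintype_card, Fintype.card_subtype]
  rw [hN, Finset.inclusion_exclusion_card_inf_compl Finset.univ S]
  have h2 : ∀ t : Finset (Fin k),
      (-1 : ℤ) ^ #t * #(t.inf S) = (-1 : ℤ) ^ #t * ((k - #t : ℕ) : ℤ) ^ ℓ := by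
    intro t
    have ht : t.inf S = ({f : Fin ℓ → Fin k | ∀ x, f x ∈ tᶜ} : Finset _) := by
      ext f
      simp only [Finset.mem_inf, hS, Finset.mem_filter, Finset.mem_univ, true_and,
        Finset.mem_compl, Set.mem_setOf_eq]
      constructor
      · intro h x hx
        exact h (f x) hx x rfl
      · intro h i hi x hfx
        exact h x (hfx ▸ hi)
    rw [ht, card_filter_mem, Finset.card_compl, Fintype.card_fin]
    push_cast
    ring
  rw [Finset.sum_congr rfl (fun t _ => h2 t)]
  rw [Finset.sum_powerset_apply_card (fun j => (-1 : ℤ) ^ j * ((k - j : ℕ) : ℤ) ^ ℓ)]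
  rw [Finset.card_univ, Fintype.card_fin]
  rw [← Finset.sum_range_reflect]
  rw [Finset.mul_sum]
  refine Finset.sum_congr rfl fun m hm => ?_
  rw [Finset.mem_range, Nat.lt_succ_iff] at hm
  rw [Nat.add_sub_cancel, Nat.sub_sub_self hm, Nat.choose_symm hm]
  have hsign : (-1 : ℤ) ^ (k - m) = (-1) ^ k * (-1) ^ m := by
    have : k + m = (k - m) + 2 * m := by omega
    have h2 : (-1 : ℤ) ^ (k + m) = (-1) ^ (k - m) := by
      rw [this, pow_add, pow_mul, neg_one_sq, one_pow, mul_one]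
    rw [← h2, pow_add]
  rw [nsmul_eq_mul, hsign]
  ring

lemma N_zero_succ (n : ℕ) : N 0 (n + 1) = 0 := by
  rw [N, Nat.card_eq_zero]
  left
  constructor
  rintro ⟨f, -⟩
  exact (f 0).elim0

/-- The key recurrence. -/
lemma N_rec (k n : ℕ) : (N (k + 1) (n + 1) : ℤ) = (k + 1) * ((N (k + 1) n : ℤ) + N k n) := by
  rw [N_eq, N_eq, N_eq]
  have hext : ∑ m ∈ range (k + 1), (-1 : ℤ) ^ m * (k.choose m) * m ^ n
      = ∑ m ∈ range (k + 2), (-1 : ℤ) ^ m * (k.choose m) * m ^ n := by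
    rw [Finset.sum_range_succ (fun m => (-1 : ℤ) ^ m * (k.choose m) * m ^ n) (k + 1),
      Nat.choose_succ_self]
    push_cast
    ring
  rw [hext]
  have key : ∑ m ∈ range (k + 2), (-1 : ℤ) ^ m * ((k + 1).choose m) * m ^ (n + 1)
      = (k + 1) * (∑ m ∈ range (k + 2), (-1 : ℤ) ^ m * ((k + 1).choose m) * m ^ n
          - ∑ m ∈ range (k + 2), (-1 : ℤ) ^ m * (k.choose m) * m ^ n) := by
    rw [← Finset.sum_sub_distrib, Finset.mul_sum]
    refine Finset.sum_congr rfl fun m _ => ?_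
    cases m with
    | zero => simp
    | succ j =>
      have habs : (k + 1) * (k.choose j) = (j + 1) * ((k + 1).choose (j + 1)) := by
        rw [mul_comm (j + 1), ← Nat.add_one_mul_choose_eq]
      have hpas : (k + 1).choose (j + 1) = k.choose j + k.choose (j + 1) :=
        Nat.choose_succ_succ k j
      have habs' : ((k : ℤ) + 1) * (k.choose j) = ((j : ℤ) + 1) * ((k + 1).choose (j + 1)) := by
        exact_mod_cast congrArg (Nat.cast : ℕ → ℤ) habs
      have hpas' : (((k + 1).choose (j + 1) : ℤ)) = (k.choose j : ℤ) + (k.choose (j + 1) : ℤ) := by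
        exact_mod_cast congrArg (Nat.cast : ℕ → ℤ) hpas
      push_cast
      linear_combination ((-1 : ℤ) ^ j * ((j : ℤ) + 1) ^ n) * habs' +
        ((-1 : ℤ) ^ j * ((j : ℤ) + 1) ^ n * ((k : ℤ) + 1)) * hpas'
  rw [key]
  ring

lemma N_rec' (k n : ℕ) : (N k (n + 1) : ℤ) = k * ((N k n : ℤ) + N (k - 1) n) := by
  cases k with
  | zero => simp [N_zero_succ]
  | succ j => rw [N_rec]; push_cast; ring

lemma N_of_lt {k ℓ : ℕ} (h : ℓ < k) : N k ℓ = 0 := by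
  rw [N, Nat.card_eq_zero]
  left
  constructor
  rintro ⟨f, hf⟩
  have := Fintype.card_le_of_surjective f hf
  simp only [Fintype.card_fin] at this
  omega

theorem alternating_sum_N_recurrence (ℓ : ℕ) (hℓ : 1 ≤ ℓ) :
    ∑ k ∈ Finset.range (ℓ + 1), (-1 : ℤ) ^ (k + 1) * N k ℓ =
      - ∑ k ∈ Finset.range (ℓ + 1), (-1 : ℤ) ^ (k + 1) * N k (ℓ - 1) := by
  obtain ⟨n, rfl⟩ : ∃ n, ℓ = n + 1 := ⟨ℓ - 1, by omega⟩
  simp only [Nat.add_sub_cancel]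
  have hrec : ∀ k ∈ Finset.range (n + 2),
      (-1 : ℤ) ^ (k + 1) * N k (n + 1)
        = (-1 : ℤ) ^ (k + 1) * k * N k n + (-1 : ℤ) ^ (k + 1) * k * N (k - 1) n := by
    intro k _
    rw [N_rec']
    ring
  rw [Finset.sum_congr rfl hrec, Finset.sum_add_distrib]
  have hA : ∑ k ∈ Finset.range (n + 2), (-1 : ℤ) ^ (k + 1) * k * N k n
      = ∑ k ∈ Finset.range (n + 1), (-1 : ℤ) ^ (k + 1) * k * N k n := by
    rw [Finset.sum_range_succ, N_of_lt (Nat.lt_succ_self n)]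
    push_cast
    ring
  have hB : ∑ k ∈ Finset.range (n + 2), (-1 : ℤ) ^ (k + 1) * k * N (k - 1) n
      = ∑ j ∈ Finset.range (n + 1), (-1 : ℤ) ^ j * (j + 1) * N j n := by
    rw [Finset.sum_range_succ' (fun k => (-1 : ℤ) ^ (k + 1) * k * N (k - 1) n) (n + 1)]
    simp only [Nat.add_sub_cancel, Nat.cast_zero, mul_zero, zero_mul, add_zero, Nat.cast_add,
      Nat.cast_one]
    refine Finset.sum_congr rfl fun j _ => ?_
    ring
  have hR : - ∑ k ∈ Finset.range (n + 2), (-1 : ℤ) ^ (k + 1) * N k n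
      = ∑ k ∈ Finset.range (n + 1), (-1 : ℤ) ^ k * N k n := by
    rw [Finset.sum_range_succ, N_of_lt (Nat.lt_succ_self n)]
    rw [Nat.cast_zero, mul_zero, add_zero, ← Finset.sum_neg_distrib]
    refine Finset.sum_congr rfl fun k _ => ?_
    ring
  rw [hA, hB, hR, ← Finset.sum_add_distrib]
  refine Finset.sum_congr rfl fun k _ => ?_
  ring
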